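/- Suppose p(i,j) = w(i)w(j)/Z(i+j) for positive weights w with w(1) = 1, where Z(n) = Σ_{k=1}^{n-1} C(n-1,k-1) w(k)w(n-k), and p satisfies the consistency equation p(i,j) = p(i+1,j) + p(i,j+1) + p(i+j,1)p(i,j) for all i,j ≥ 1. Then the sequence W_j = w(j+1)/w(j) is affine in j: there exist a, b with W_j = a + bj for all j ≥ 1. -/

import Mathlib

open Finset

/-- for a consistent binary Gibbs splitting rule, the ratio sequence
`W j = w (j+1) / w j` is affine in `j`. -/
theorem gibbs_consistent_ratio_affine
    (w : ℕ → ℝ) (hw : ∀ j : ℕ, 1 ≤ j → 0 < w j) (hw1 : w 1 = 1)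
    (Z : ℕ → ℝ)
    (hZ : ∀ n : ℕ, 2 ≤ n →
      Z n = ∑ k ∈ Finset.Icc 1 (n - 1), ((n - 1).choose (k - 1) : ℝ) * w k * w (n - k))
    (p : ℕ → ℕ → ℝ)
    (hp : ∀ i j : ℕ, 1 ≤ i → 1 ≤ j → p i j = w i * w j / Z (i + j))
    (hcons : ∀ i j : ℕ, 1 ≤ i → 1 ≤ j →
      p i j = p (i + 1) j + p i (j + 1) + p (i + j) 1 * p i j) :
    ∃ a b : ℝ, ∀ j : ℕ, 1 ≤ j → w (j + 1) / w j = a + b * (j : ℝ) := by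
  set W : ℕ → ℝ := fun j => w (j + 1) / w j with hW
  -- Z is positive
  have hZpos : ∀ n : ℕ, 2 ≤ n → 0 < Z n := by
    intro n hn
    rw [hZ n hn]
    apply Finset.sum_pos
    · intro k hk
      simp only [Finset.mem_Icc] at hk
      have h1 : 0 < w k := hw k hk.1
      have h2 : 0 < w (n - k) := hw (n - k) (by omega)
      have h3 : 0 < ((n - 1).choose (k - 1) : ℝ) := by
        have : 0 < (n - 1).choose (k - 1) := Nat.choose_pos (by omega)
        exact_mod_cast this
      positivity
    · exact Finset.nonempty_Icc.mpr (by omega)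
  -- key: W i + W j depends only on i + j
  have key : ∀ i j : ℕ, 1 ≤ i → 1 ≤ j →
      W i + W j = (Z (i + j + 1) - w (i + j)) / Z (i + j) := by
    intro i j hi hj
    have h := hcons i j hi hj
    rw [hp i j hi hj, hp (i + 1) j (by omega) hj, hp i (j + 1) hi (by omega),
      hp (i + j) 1 (by omega) le_rfl] at h
    have e1 : i + 1 + j = i + j + 1 := by omega
    have e2 : i + (j + 1) = i + j + 1 := by omega
    rw [e1, e2, hw1] at h
    have hA : Z (i + j) ≠ 0 := ne_of_gt (hZpos _ (by omega))
    have hB : Z (i + j + 1) ≠ 0 := ne_of_gt (hZpos _ (by omega))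
    have hwi : w i ≠ 0 := ne_of_gt (hw i hi)
    have hwj : w j ≠ 0 := ne_of_gt (hw j hj)
    simp only [hW]
    field_simp at h ⊢
    ring_nf at h ⊢
    have hB' : Z (1 + i + j) ≠ 0 := by
      have e : 1 + i + j = i + j + 1 := by omega
      rw [e]; exact hB
    have h' : (w i * Z (i + j) * w (1 + j) + w j * Z (i + j) * w (1 + i)) *
        (Z (1 + i + j) * Z (i + j)) =
        (w i * w j * Z (1 + i + j) - w i * w j * w (i + j)) *
        (Z (1 + i + j) * Z (i + j)) := by linear_combination (-(Z (1 + i + j) * Z (i + j))) * h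
    have h'' := mul_right_cancel₀ (mul_ne_zero hB' hA) h'
    linarith [h'']
  -- exchange relation
  have exch : ∀ i j : ℕ, 1 ≤ i → 1 ≤ j → W (i + 1) + W j = W i + W (j + 1) := by
    intro i j hi hj
    have h1 := key (i + 1) j (by omega) hj
    have h2 := key i (j + 1) hi (by omega)
    have e : i + 1 + j = i + (j + 1) := by omega
    rw [e] at h1
    rw [h1, h2]
  set b : ℝ := W 2 - W 1 with hb
  have step : ∀ j : ℕ, 1 ≤ j → W (j + 1) = W j + b := by
    intro j hj
    have := exch j 1 hj le_rfl
    rw [hb]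
    linarith
  refine ⟨W 1 - b, b, ?_⟩
  intro j hj
  induction j with
  | zero => omega
  | succ n ih =>
    rcases Nat.eq_or_lt_of_le hj with h | h
    · simp only [← h]
      push_cast
      ring
    · have hn : 1 ≤ n := by omega
      have := step n hn
      have ihn := ih hn
      have ihn' : W n = W 1 - b + b * (n : ℝ) := ihn
      show W (n + 1) = _
      rw [this, ihn']
      push_cast
      ring
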